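/- Let r ∈ (0,1) and 0 ≤ a < b. Then ∫_a^b r^z/(r^z + (1−r^z)²) dz = (2/(√3·log r))·[arctan((2r^b − 1)/√3) − arctan((2r^a − 1)/√3)]. -/

import Mathlib

open Real MeasureTheory intervalIntegral

/-- For `r ∈ (0,1)` and `0 ≤ a < b`,
`∫_a^b r^z/(r^z + (1−r^z)²) dz
  = (2/(√3 log r))[arctan((2r^b−1)/√3) − arctan((2r^a−1)/√3)]`. -/
theorem mean_speed_uniform_uncertainty_integral
    (r a b : ℝ) (hr : r ∈ Set.Ioo (0:ℝ) 1) (ha : 0 ≤ a) (hab : a < b) :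
    ∫ z in a..b, r ^ z / (r ^ z + (1 - r ^ z) ^ 2)
      = 2 / (Real.sqrt 3 * Real.log r) *
        (Real.arctan ((2 * r ^ b - 1) / Real.sqrt 3)
          - Real.arctan ((2 * r ^ a - 1) / Real.sqrt 3)) := by
  obtain ⟨hr0, hr1⟩ := hr
  have hL : Real.log r ≠ 0 := Real.log_ne_zero_of_pos_of_ne_one hr0 hr1.ne
  have hs3 : Real.sqrt 3 > 0 := Real.sqrt_pos.mpr (by norm_num)
  set F : ℝ → ℝ := fun z =>
    2 / (Real.sqrt 3 * Real.log r) * Real.arctan ((2 * r ^ z - 1) / Real.sqrt 3)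
  have hderiv : ∀ z ∈ Set.uIcc a b, HasDerivAt F (r ^ z / (r ^ z + (1 - r ^ z) ^ 2)) z := by
    intro z _
    have hx : (0:ℝ) < r ^ z := Real.rpow_pos_of_pos hr0 z
    have h1 : HasDerivAt (fun z : ℝ => r ^ z) (r ^ z * Real.log r) z :=
      (Real.hasStrictDerivAt_const_rpow hr0 z).hasDerivAt
    have h2 : HasDerivAt (fun z : ℝ => (2 * r ^ z - 1) / Real.sqrt 3)
        (2 * (r ^ z * Real.log r) / Real.sqrt 3) z := by
      exact ((h1.const_mul 2).sub_const 1).div_const _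
    have h3 := (Real.hasDerivAt_arctan ((2 * r ^ z - 1) / Real.sqrt 3)).comp z h2
    have h4 := h3.const_mul (2 / (Real.sqrt 3 * Real.log r))
    refine HasDerivAt.congr_deriv h4 ?_
    have hden : r ^ z + (1 - r ^ z) ^ 2 > 0 := by positivity
    have h33 : Real.sqrt 3 ^ 2 = 3 := Real.sq_sqrt (by norm_num)
    have key : 1 + ((2 * r ^ z - 1) / Real.sqrt 3) ^ 2
        = 4 / 3 * (r ^ z + (1 - r ^ z) ^ 2) := by
      rw [div_pow, h33]; ring
    rw [key]
    field_simp
    linear_combination (-4) * h33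
  have hcont : ContinuousOn (fun z => r ^ z / (r ^ z + (1 - r ^ z) ^ 2)) (Set.uIcc a b) := by
    have hc : Continuous fun z : ℝ => r ^ z :=
      Continuous.rpow continuous_const continuous_id (fun x => Or.inl hr0.ne')
    apply Continuous.continuousOn
    apply hc.div (by continuity)
    intro z
    have hx : (0:ℝ) < r ^ z := Real.rpow_pos_of_pos hr0 z
    positivity
  rw [intervalIntegral.integral_eq_sub_of_hasDerivAt hderiv (hcont.intervalIntegrable)]
  simp only [F]
  ring
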